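/- Let X be a metric space of diameter ≤ π and define the spherical suspension S(X) = X × [0,π]/∼ with metric cos d((x₁,a₁),(x₂,a₂)) = cos a₁ cos a₂ + sin a₁ sin a₂ cos d_X(x₁,x₂). Then this formula defines a metric on S(X): it is symmetric, vanishes exactly on the diagonal (after the quotient identification), and satisfies the triangle inequality. -/

import Mathlib

open Real InnerProductSpace

lemma arccos_antitone : Antitone Real.arccos := by
  intro x y h
  unfold Real.arccos
  have := Real.monotone_arcsin h
  linarith

lemma arccos_inner_triangle {E : Type*} [NormedAddCommGroup E] [InnerProductSpace ℝ E]
    (x y z : E) (hx : ‖x‖ = 1) (hy : ‖y‖ = 1) (hz : ‖z‖ = 1) :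
    Real.arccos ⟪x, z⟫_ℝ ≤ Real.arccos ⟪x, y⟫_ℝ + Real.arccos ⟪y, z⟫_ℝ := by
  set α := Real.arccos ⟪x, y⟫_ℝ with hα
  set β := Real.arccos ⟪y, z⟫_ℝ with hβ
  rcases le_or_gt Real.pi (α + β) with h | h
  · exact le_trans (Real.arccos_le_pi _) h
  have h1 : |⟪x, y⟫_ℝ| ≤ 1 := by simpa [hx, hy] using abs_real_inner_le_norm x y
  have h2 : |⟪y, z⟫_ℝ| ≤ 1 := by simpa [hy, hz] using abs_real_inner_le_norm y z
  have hcα : Real.cos α = ⟪x, y⟫_ℝ := Real.cos_arccos (neg_le_of_abs_le h1) (le_of_abs_le h1)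
  have hcβ : Real.cos β = ⟪y, z⟫_ℝ := Real.cos_arccos (neg_le_of_abs_le h2) (le_of_abs_le h2)
  have hsα : Real.sin α = Real.sqrt (1 - ⟪x, y⟫_ℝ ^ 2) := Real.sin_arccos _
  have hsβ : Real.sin β = Real.sqrt (1 - ⟪y, z⟫_ℝ ^ 2) := Real.sin_arccos _
  set x' := x - ⟪x, y⟫_ℝ • y with hx'
  set z' := z - ⟪y, z⟫_ℝ • y with hz'
  have hyy : ⟪y, y⟫_ℝ = 1 := by
    rw [real_inner_self_eq_norm_sq, hy]; norm_num
  have hinner : ⟪x', z'⟫_ℝ = ⟪x, z⟫_ℝ - ⟪x, y⟫_ℝ * ⟪y, z⟫_ℝ := by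
    simp only [hx', hz', inner_sub_left, inner_sub_right, real_inner_smul_left,
      real_inner_smul_right, hyy, real_inner_comm z y]
    ring
  have hnx' : ‖x'‖ = Real.sqrt (1 - ⟪x, y⟫_ℝ ^ 2) := by
    rw [norm_eq_sqrt_real_inner]
    congr 1
    simp only [hx', inner_sub_left, inner_sub_right, real_inner_smul_left,
      real_inner_smul_right, hyy, real_inner_comm y x]
    have : ⟪x, x⟫_ℝ = 1 := by rw [real_inner_self_eq_norm_sq, hx]; norm_num
    rw [this]; ring
  have hnz' : ‖z'‖ = Real.sqrt (1 - ⟪y, z⟫_ℝ ^ 2) := by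
    rw [norm_eq_sqrt_real_inner]
    congr 1
    simp only [hz', inner_sub_left, inner_sub_right, real_inner_smul_left,
      real_inner_smul_right, hyy, real_inner_comm y z]
    have : ⟪z, z⟫_ℝ = 1 := by rw [real_inner_self_eq_norm_sq, hz]; norm_num
    rw [this]; ring
  have hCS : -(‖x'‖ * ‖z'‖) ≤ ⟪x', z'⟫_ℝ :=
    neg_le_of_abs_le (abs_real_inner_le_norm x' z')
  have key : Real.cos (α + β) ≤ ⟪x, z⟫_ℝ := by
    rw [Real.cos_add, hcα, hcβ, hsα, hsβ]
    have := hCS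
    rw [hinner, hnx', hnz'] at this
    linarith
  calc Real.arccos ⟪x, z⟫_ℝ ≤ Real.arccos (Real.cos (α + β)) := arccos_antitone key
    _ = α + β := Real.arccos_cos (add_nonneg (Real.arccos_nonneg _) (Real.arccos_nonneg _)) h.le

noncomputable def sv (a φ : ℝ) : EuclideanSpace ℝ (Fin 3) :=
  WithLp.toLp 2 ![Real.sin a * Real.cos φ, Real.sin a * Real.sin φ, Real.cos a]

lemma sv_norm (a φ : ℝ) : ‖sv a φ‖ = 1 := by
  rw [EuclideanSpace.norm_eq]
  have : ∑ i, ‖sv a φ i‖ ^ 2 = 1 := by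
    simp only [Fin.sum_univ_three, sv, PiLp.toLp_apply, Matrix.cons_val_zero, Matrix.cons_val_one,
      Matrix.head_cons, Matrix.cons_val_two, Matrix.tail_cons, sq_abs, Real.norm_eq_abs]
    have h1 := Real.sin_sq_add_cos_sq a
    have h2 := Real.sin_sq_add_cos_sq φ
    nlinarith [h1, h2]
  rw [this, Real.sqrt_one]

lemma sv_inner (a b φ ψ : ℝ) :
    ⟪sv a φ, sv b ψ⟫_ℝ = Real.cos a * Real.cos b + Real.sin a * Real.sin b * Real.cos (ψ - φ) := by
  simp only [sv, PiLp.toLp_apply, PiLp.inner_apply, RCLike.inner_apply, starRingEnd_apply, star_trivial,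
    Fin.sum_univ_three, Matrix.cons_val_zero, Matrix.cons_val_one, Matrix.head_cons,
    Matrix.cons_val_two, Matrix.tail_cons, Real.cos_sub]
  ring

/-- Key scalar inequality: spherical law-of-cosines triangle inequality. -/
lemma key_ineq (a b c s t : ℝ) (hb : b ∈ Set.Icc 0 Real.pi) (hc : c ∈ Set.Icc 0 Real.pi)
    (hs : s ∈ Set.Icc 0 Real.pi) (ht : t ∈ Set.Icc 0 Real.pi) :
    Real.arccos (Real.cos a * Real.cos c + Real.sin a * Real.sin c * Real.cos (min (s + t) Real.pi))
      ≤ Real.arccos (Real.cos a * Real.cos b + Real.sin a * Real.sin b * Real.cos s)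
        + Real.arccos (Real.cos b * Real.cos c + Real.sin b * Real.sin c * Real.cos t) := by
  set φ := min (s + t) Real.pi with hφ
  have hsbc : 0 ≤ Real.sin b * Real.sin c :=
    mul_nonneg (Real.sin_nonneg_of_nonneg_of_le_pi hb.1 hb.2)
      (Real.sin_nonneg_of_nonneg_of_le_pi hc.1 hc.2)
  have hcosφs : Real.cos t ≤ Real.cos (φ - s) := by
    rcases min_cases (s + t) Real.pi with ⟨h1, h2⟩ | ⟨h1, h2⟩
    · rw [hφ, h1, add_sub_cancel_left]
    · rw [hφ, h1]
      exact Real.cos_le_cos_of_nonneg_of_le_pi (by linarith [hs.2]) ht.2 (by linarith)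
  have hxy := sv_inner a b 0 s
  have hyz := sv_inner b c s φ
  have hxz := sv_inner a c 0 φ
  rw [sub_zero] at hxy hxz
  have tri := arccos_inner_triangle (sv a 0) (sv b s) (sv c φ) (sv_norm _ _) (sv_norm _ _)
    (sv_norm _ _)
  rw [hxy, hyz, hxz] at tri
  refine tri.trans (add_le_add_right (arccos_antitone ?_) _)
  have := mul_le_mul_of_nonneg_left hcosφs hsbc
  linarith

theorem stmt_10 {X : Type*} [MetricSpace X]
    (hdiam : ∀ x y : X, dist x y ≤ Real.pi)
    (d : X × ℝ → X × ℝ → ℝ)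
    (hd : d = fun p q => Real.arccos
      (Real.cos p.2 * Real.cos q.2 +
        Real.sin p.2 * Real.sin q.2 * Real.cos (dist p.1 q.1))) :
    ∀ p q r : X × ℝ,
      p.2 ∈ Set.Icc 0 Real.pi → q.2 ∈ Set.Icc 0 Real.pi → r.2 ∈ Set.Icc 0 Real.pi →
      (d p q ∈ Set.Icc 0 Real.pi) ∧
      d p q = d q p ∧
      (d p q = 0 ↔ (p.2 = q.2 ∧ (p.1 = q.1 ∨ p.2 = 0 ∨ p.2 = Real.pi))) ∧
      d p r ≤ d p q + d q r := by
  intro p q r hp hq hr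
  subst hd
  simp only
  obtain ⟨ha0, haπ⟩ := hp
  obtain ⟨hb0, hbπ⟩ := hq
  obtain ⟨hc0, hcπ⟩ := hr
  have hsa : 0 ≤ Real.sin p.2 := Real.sin_nonneg_of_nonneg_of_le_pi ha0 haπ
  have hsb : 0 ≤ Real.sin q.2 := Real.sin_nonneg_of_nonneg_of_le_pi hb0 hbπ
  have hsc : 0 ≤ Real.sin r.2 := Real.sin_nonneg_of_nonneg_of_le_pi hc0 hcπ
  refine ⟨⟨Real.arccos_nonneg _, Real.arccos_le_pi _⟩, ?_, ?_, ?_⟩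
  · rw [dist_comm]; congr 1; ring
  · -- zero iff
    rw [Real.arccos_eq_zero]
    constructor
    · intro hE
      set θ := dist p.1 q.1 with hθ
      have hθ0 : 0 ≤ θ := dist_nonneg
      have hθπ : θ ≤ Real.pi := hdiam _ _
      have hcos1 : Real.cos (p.2 - q.2) = 1 := by
        nlinarith [Real.cos_le_one (p.2 - q.2), Real.cos_sub p.2 q.2, Real.cos_le_one θ,
          mul_nonneg hsa hsb]
      have hab : p.2 = q.2 := by
        have := (Real.cos_eq_one_iff_of_lt_of_lt (x := p.2 - q.2)
          (by nlinarith [Real.pi_pos]) (by nlinarith [Real.pi_pos])).1 hcos1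
        linarith
      refine ⟨hab, ?_⟩
      have hrest : Real.sin p.2 * Real.sin q.2 * (1 - Real.cos θ) = 0 := by
        nlinarith [Real.cos_sub p.2 q.2, Real.cos_le_one θ, mul_nonneg hsa hsb]
      rcases mul_eq_zero.1 hrest with h | h
      · right
        rw [hab] at h ⊢
        have hsq : Real.sin q.2 = 0 := by
          rcases mul_eq_zero.1 h with h' | h' <;> exact h'
        by_cases hqπ : q.2 = Real.pi
        · right; exact hqπ
        · left
          exact (Real.sin_eq_zero_iff_of_lt_of_lt (by linarith [Real.pi_pos])
            (lt_of_le_of_ne hbπ hqπ)).1 hsq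
      · left
        have hcosθ : Real.cos θ = 1 := by linarith
        have : θ = 0 := (Real.cos_eq_one_iff_of_lt_of_lt
          (by nlinarith [Real.pi_pos]) (by nlinarith [Real.pi_pos])).1 hcosθ
        exact dist_eq_zero.1 this
    · rintro ⟨hab, hcase⟩
      rw [← hab]
      rcases hcase with h | h | h
      · rw [h]
        simp only [dist_self, Real.cos_zero, mul_one]
        nlinarith [Real.sin_sq_add_cos_sq p.2]
      · rw [h]; simp
      · rw [h]; simp
  · -- triangle
    have hθ0 : (0:ℝ) ≤ dist p.1 r.1 := dist_nonneg
    have hφπ : min (dist p.1 q.1 + dist q.1 r.1) Real.pi ≤ Real.pi := min_le_right _ _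
    have hθφ : dist p.1 r.1 ≤ min (dist p.1 q.1 + dist q.1 r.1) Real.pi :=
      le_min (dist_triangle _ _ _) (hdiam _ _)
    have hcos : Real.cos (min (dist p.1 q.1 + dist q.1 r.1) Real.pi) ≤ Real.cos (dist p.1 r.1) :=
      Real.cos_le_cos_of_nonneg_of_le_pi hθ0 hφπ hθφ
    have hsac : 0 ≤ Real.sin p.2 * Real.sin r.2 := mul_nonneg hsa hsc
    have hmono := mul_le_mul_of_nonneg_left hcos hsac
    refine le_trans ?_ (key_ineq p.2 q.2 r.2 (dist p.1 q.1) (dist q.1 r.1) ⟨hb0, hbπ⟩ ⟨hc0, hcπ⟩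
      ⟨dist_nonneg, hdiam _ _⟩ ⟨dist_nonneg, hdiam _ _⟩)
    exact arccos_antitone (by linarith)
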